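/- Let Q(z) = ∑_{k=0}^{r−1} c_k z^{k} with complex coefficients c_k, and let N ≥ 4πr be an integer. Then sup_{|z|=1} |Q(z)| ≤ (1 + 4πr/N) · max_{k=0,...,N−1} |Q(e^{2πjk/N})|. -/

import Mathlib

open Finset Complex

lemma pdb_cnt_card (n : ℕ) (d : ℤ) :
    #((Finset.range n ×ˢ Finset.range n).filter (fun p => (p.1 : ℤ) - p.2 = d))
      = n - d.natAbs := by
  rw [eq_comm, ← Finset.card_range (n - d.natAbs)]
  apply Finset.card_nbij (fun i => (i + d.toNat, i + (-d).toNat))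
  · intro i hi
    simp only [Finset.mem_coe, mem_range] at hi
    simp only [Finset.mem_coe, mem_filter, mem_product, mem_range]
    refine ⟨⟨?_, ?_⟩, ?_⟩
    · omega
    · omega
    · push_cast; omega
  · intro i hi j hj h
    simp only [Prod.mk.injEq] at h
    omega
  · intro p hp
    simp only [Finset.coe_filter, Set.mem_setOf_eq, mem_product, mem_range] at hp
    obtain ⟨⟨h1, h2⟩, h3⟩ := hp
    refine ⟨p.1 - d.toNat, ?_, ?_⟩
    · simp only [Finset.mem_coe, mem_range]; omega
    · simp only [Prod.ext_iff]; constructor <;> omega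

lemma pdb_cnt_sum (n : ℕ) (d : ℤ) :
    (∑ k ∈ Finset.range n, ∑ l ∈ Finset.range n, if (k : ℤ) - l = d then (1:ℂ) else 0)
      = ((n - d.natAbs : ℕ) : ℂ) := by
  rw [← Finset.sum_product', Finset.sum_boole, pdb_cnt_card]

lemma pdb_sum_om (N : ℕ) (hN : 0 < N) (d : ℤ) (hd : d.natAbs < N) :
    ∑ j ∈ Finset.range N, (Complex.exp (2*Real.pi*Complex.I/N) ^ d) ^ j
      = if d = 0 then (N : ℂ) else 0 := by
  have hNne : (N : ℂ) ≠ 0 := Nat.cast_ne_zero.mpr hN.ne'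
  have hx : Complex.exp (2*Real.pi*Complex.I/N) ^ d = Complex.exp (d * (2*Real.pi*Complex.I/N)) := by
    rw [Complex.exp_int_mul]
  by_cases h0 : d = 0
  · subst h0; simp
  · rw [if_neg h0]
    have hxN : (Complex.exp (2*Real.pi*Complex.I/N) ^ d) ^ N = 1 := by
      rw [hx, ← Complex.exp_nat_mul]
      have : (N : ℂ) * (d * (2*Real.pi*Complex.I/N)) = d * (2*Real.pi*Complex.I) := by
        field_simp
      rw [this, Complex.exp_int_mul_two_pi_mul_I]
    have hx1 : Complex.exp (2*Real.pi*Complex.I/N) ^ d ≠ 1 := by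
      rw [hx]
      intro h
      rw [Complex.exp_eq_one_iff] at h
      obtain ⟨m, hm⟩ := h
      have hpi : (Real.pi : ℂ) ≠ 0 := by exact_mod_cast Real.pi_ne_zero
      have hdm : (d : ℂ) = m * N := by
        have h2 : (2 * (Real.pi:ℂ) * Complex.I) ≠ 0 := by
          simp [hpi, Complex.I_ne_zero]
        apply mul_right_cancel₀ h2
        field_simp at hm
        linear_combination (2 * (Real.pi:ℂ) * Complex.I) * hm
      have hdm' : d = m * N := by exact_mod_cast hdm
      have hA : d.natAbs = m.natAbs * N := by
        rw [hdm', Int.natAbs_mul, Int.natAbs_natCast]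
      have hm1 : 1 ≤ m.natAbs := by
        rcases Nat.eq_zero_or_pos m.natAbs with h | h
        · exfalso; apply h0
          have : m = 0 := Int.natAbs_eq_zero.mp h
          simp [this] at hdm'; omega
        · exact h
      have : N ≤ d.natAbs := by
        calc N = 1 * N := (one_mul N).symm
        _ ≤ m.natAbs * N := Nat.mul_le_mul_right N hm1
        _ = d.natAbs := hA.symm
      omega
    rw [geom_sum_eq hx1, hxN]
    simp

lemma pdb_pow_swap (w : ℂ) (j : ℕ) (d : ℤ) : (w ^ j) ^ d = (w ^ d) ^ j := by
  rw [← zpow_natCast w j, ← zpow_mul, mul_comm, zpow_mul, zpow_natCast]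

/-- The key orthogonality computation. -/
lemma pdb_key (N : ℕ) (hN : 0 < N) (z : ℂ) (m : ℕ) (e : ℤ)
    (h : ((m:ℤ) - e).natAbs < N) :
    ∑ j ∈ Finset.range N,
        (Complex.exp (2*Real.pi*Complex.I/N) ^ j) ^ m
          * (z * (Complex.exp (2*Real.pi*Complex.I/N) ^ j)⁻¹) ^ e
      = if (m:ℤ) = e then (N:ℂ) * z ^ e else 0 := by
  have hω : Complex.exp (2*Real.pi*Complex.I/N) ≠ 0 := Complex.exp_ne_zero _
  have step : ∀ j : ℕ,
      (Complex.exp (2*Real.pi*Complex.I/N)^j)^m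
        * (z*(Complex.exp (2*Real.pi*Complex.I/N)^j)⁻¹)^e
      = z^e * (Complex.exp (2*Real.pi*Complex.I/N)^((m:ℤ)-e))^j := by
    intro j
    have hu : (Complex.exp (2*Real.pi*Complex.I/N)^j) ≠ 0 := pow_ne_zero j hω
    have h1 : (Complex.exp (2*Real.pi*Complex.I/N)^j)^m
        * (z*(Complex.exp (2*Real.pi*Complex.I/N)^j)⁻¹)^e
        = z^e * (Complex.exp (2*Real.pi*Complex.I/N)^j) ^ ((m:ℤ) - e) := by
      rw [mul_zpow, inv_zpow, ← zpow_neg, sub_eq_add_neg,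
        zpow_add₀ hu, ← zpow_natCast (Complex.exp (2*Real.pi*Complex.I/N)^j) m]
      ring
    rw [h1, pdb_pow_swap]
  rw [Finset.sum_congr rfl (fun j _ => step j), ← Finset.mul_sum,
    pdb_sum_om N hN ((m:ℤ)-e) h]
  by_cases hme : (m:ℤ) = e
  · rw [if_pos (sub_eq_zero.mpr hme), if_pos hme]; ring
  · rw [if_neg (sub_ne_zero.mpr hme), if_neg hme]; ring

noncomputable def pdbW (N : ℕ) (z : ℂ) (j : ℕ) : ℂ :=
  z * (Complex.exp (2*Real.pi*Complex.I/N) ^ j)⁻¹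

noncomputable def pdbP (N : ℕ) (z : ℂ) (b j : ℕ) : ℂ :=
  ∑ k ∈ Finset.range b, pdbW N z j ^ (k:ℤ)

noncomputable def pdbT (N : ℕ) (z : ℂ) (a n j : ℕ) : ℂ :=
  pdbW N z j ^ (a:ℤ) * (pdbP N z n j * (starRingEnd ℂ) (pdbP N z n j))
    + (pdbW N z j ^ ((2*a : ℕ):ℤ) + 1) * (pdbP N z a j * (starRingEnd ℂ) (pdbP N z a j))

lemma pdb_absW (N : ℕ) (z : ℂ) (hz : ‖z‖ = 1) (j : ℕ) :
    ‖pdbW N z j‖ = 1 := by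
  have habsω : ‖Complex.exp (2*Real.pi*Complex.I/N)‖ = 1 := by
    have : (2*Real.pi*Complex.I/N) = ((2*Real.pi/N : ℝ) : ℂ) * Complex.I := by
      push_cast; ring
    rw [this, Complex.norm_exp_ofReal_mul_I]
  rw [pdbW, norm_mul, norm_inv, norm_pow, habsω, one_pow, hz]
  norm_num

lemma pdb_Wne (N : ℕ) (z : ℂ) (hz : ‖z‖ = 1) (j : ℕ) :
    pdbW N z j ≠ 0 := by
  intro h
  have := pdb_absW N z hz j
  rw [h] at this
  simp at this

lemma pdb_PP (N : ℕ) (z : ℂ) (hz : ‖z‖ = 1) (b j : ℕ) :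
    pdbP N z b j * (starRingEnd ℂ) (pdbP N z b j)
      = ∑ k ∈ Finset.range b, ∑ l ∈ Finset.range b, pdbW N z j ^ ((k:ℤ) - l) := by
  have hWne := pdb_Wne N z hz j
  have hconj : (starRingEnd ℂ) (pdbP N z b j) = ∑ l ∈ Finset.range b, pdbW N z j ^ (-(l:ℤ)) := by
    rw [pdbP, map_sum]
    refine Finset.sum_congr rfl (fun l _ => ?_)
    rw [map_zpow₀, ← Complex.inv_eq_conj (by rw [pdb_absW N z hz j]),
      inv_zpow, ← zpow_neg]
  rw [hconj, pdbP, Finset.sum_mul]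
  refine Finset.sum_congr rfl (fun k _ => ?_)
  rw [Finset.mul_sum]
  refine Finset.sum_congr rfl (fun l _ => ?_)
  rw [← zpow_add₀ hWne, sub_eq_add_neg]

lemma pdb_T_expand (N : ℕ) (z : ℂ) (hz : ‖z‖ = 1) (a n j : ℕ) :
    pdbT N z a n j
      = (∑ k ∈ Finset.range n, ∑ l ∈ Finset.range n, pdbW N z j ^ ((a:ℤ) + ((k:ℤ) - l)))
        + ((∑ k ∈ Finset.range a, ∑ l ∈ Finset.range a, pdbW N z j ^ (((2*a:ℕ):ℤ) + ((k:ℤ) - l)))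
          + (∑ k ∈ Finset.range a, ∑ l ∈ Finset.range a, pdbW N z j ^ ((0:ℤ) + ((k:ℤ) - l)))) := by
  have hWne := pdb_Wne N z hz j
  rw [pdbT, pdb_PP N z hz, pdb_PP N z hz, add_mul, one_mul]
  congr 1
  · rw [Finset.mul_sum]
    refine Finset.sum_congr rfl (fun k _ => ?_)
    rw [Finset.mul_sum]
    refine Finset.sum_congr rfl (fun l _ => ?_)
    rw [zpow_add₀ hWne]
  congr 1
  · rw [Finset.mul_sum]
    refine Finset.sum_congr rfl (fun k _ => ?_)
    rw [Finset.mul_sum]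
    refine Finset.sum_congr rfl (fun l _ => ?_)
    rw [zpow_add₀ hWne]
  · refine Finset.sum_congr rfl (fun k _ => ?_)
    refine Finset.sum_congr rfl (fun l _ => ?_)
    rw [zero_add]

/-- summing one piece of the kernel against a power over the grid -/
lemma pdb_piece (N : ℕ) (hN : 0 < N) (z : ℂ) (m : ℕ) (b : ℕ) (s : ℤ)
    (hcond : ∀ k l : ℕ, k < b → l < b → ((m:ℤ) - (s + ((k:ℤ) - l))).natAbs < N) :
    ∑ j ∈ Finset.range N, ∑ k ∈ Finset.range b, ∑ l ∈ Finset.range b,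
        (Complex.exp (2*Real.pi*Complex.I/N) ^ j) ^ m * pdbW N z j ^ (s + ((k:ℤ) - l))
      = (N:ℂ) * z ^ m * ((b - ((m:ℤ) - s).natAbs : ℕ) : ℂ) := by
  rw [Finset.sum_comm]
  have hsw : ∀ k ∈ Finset.range b,
      (∑ j ∈ Finset.range N, ∑ l ∈ Finset.range b,
        (Complex.exp (2*Real.pi*Complex.I/N) ^ j) ^ m * pdbW N z j ^ (s + ((k:ℤ) - l)))
      = ∑ l ∈ Finset.range b, ∑ j ∈ Finset.range N,
        (Complex.exp (2*Real.pi*Complex.I/N) ^ j) ^ m * pdbW N z j ^ (s + ((k:ℤ) - l)) := by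
    intro k _; exact Finset.sum_comm
  rw [Finset.sum_congr rfl hsw]
  have hinner : ∀ k ∈ Finset.range b, ∀ l ∈ Finset.range b,
      (∑ j ∈ Finset.range N,
        (Complex.exp (2*Real.pi*Complex.I/N) ^ j) ^ m * pdbW N z j ^ (s + ((k:ℤ) - l)))
      = ((N:ℂ) * z ^ m) * (if (k:ℤ) - l = (m:ℤ) - s then (1:ℂ) else 0) := by
    intro k hk l hl
    rw [mem_range] at hk hl
    have hkey := pdb_key N hN z m (s + ((k:ℤ) - l)) (hcond k l hk hl)
    simp only [pdbW]
    rw [hkey]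
    by_cases hme : (m:ℤ) = s + ((k:ℤ) - l)
    · rw [if_pos hme, if_pos (by omega)]
      have hzz : z ^ (s + ((k:ℤ) - l)) = z ^ ((m : ℕ) : ℤ) := by rw [← hme]
      rw [hzz, zpow_natCast]; ring
    · rw [if_neg hme, if_neg (by omega)]; ring
  calc ∑ k ∈ Finset.range b, ∑ l ∈ Finset.range b, ∑ j ∈ Finset.range N,
        (Complex.exp (2*Real.pi*Complex.I/N) ^ j) ^ m * pdbW N z j ^ (s + ((k:ℤ) - l))
      = ∑ k ∈ Finset.range b, ∑ l ∈ Finset.range b,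
          ((N:ℂ) * z ^ m) * (if (k:ℤ) - l = (m:ℤ) - s then (1:ℂ) else 0) := by
        refine Finset.sum_congr rfl (fun k hk => ?_)
        exact Finset.sum_congr rfl (fun l hl => hinner k hk l hl)
    _ = ((N:ℂ) * z ^ m) * ∑ k ∈ Finset.range b, ∑ l ∈ Finset.range b,
          (if (k:ℤ) - l = (m:ℤ) - s then (1:ℂ) else 0) := by
        rw [Finset.mul_sum]
        refine Finset.sum_congr rfl (fun k _ => ?_)
        rw [Finset.mul_sum]
    _ = (N:ℂ) * z ^ m * ((b - ((m:ℤ) - s).natAbs : ℕ) : ℂ) := by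
        rw [pdb_cnt_sum]

theorem polynomial_discretization_bound (r : ℕ) (hr : 1 ≤ r) (c : Fin r → ℂ)
    (N : ℕ) (hN : 4 * Real.pi * r ≤ N) (z : ℂ) (hz : ‖z‖ = 1) :
    ‖∑ k : Fin r, c k * z ^ (k : ℕ)‖ ≤
      (1 + 4 * Real.pi * r / N) *
        (Finset.range N).sup'
          (Finset.nonempty_range_iff.mpr (by
            intro h; rw [h] at hN; push_cast at hN; nlinarith [Real.pi_pos, (show (1:ℝ) ≤ r by exact_mod_cast hr)]))
          (fun k => ‖∑ j : Fin r,
            c j * Complex.exp (2 * Real.pi * Complex.I * k / N) ^ (j : ℕ)‖) := by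
  classical
  have hπ3 : (3:ℝ) < Real.pi := Real.pi_gt_three
  have hr1 : (1:ℝ) ≤ r := by exact_mod_cast hr
  have hN12 : 12 * r + 1 ≤ N := by
    have h1 : (12 * r : ℝ) < N := by nlinarith
    have : 12 * r < N := by exact_mod_cast h1
    omega
  have hNpos : 0 < N := by omega
  set a := r / 2 with hadef
  set n := N - r with hndef
  have ha1 : 2 * a ≤ r := by omega
  have ha2 : r ≤ 2 * a + 1 := by omega
  have hnpos : 0 < n := by omega
  have hnodes : ∀ k : ℕ, Complex.exp (2 * Real.pi * Complex.I * k / N)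
      = Complex.exp (2*Real.pi*Complex.I/N) ^ k := by
    intro k
    rw [← Complex.exp_nat_mul]
    congr 1
    ring
  set M := (Finset.range N).sup'
      (Finset.nonempty_range_iff.mpr (by
        intro h; rw [h] at hN; push_cast at hN; nlinarith [Real.pi_pos, (show (1:ℝ) ≤ r by exact_mod_cast hr)]))
      (fun k => ‖∑ j : Fin r,
        c j * Complex.exp (2 * Real.pi * Complex.I * k / N) ^ (j : ℕ)‖) with hMdef
  have hMle : ∀ k, k < N →
      ‖∑ j : Fin r, c j * (Complex.exp (2*Real.pi*Complex.I/N) ^ k) ^ (j : ℕ)‖ ≤ M := by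
    intro k hk
    have h := Finset.le_sup' (fun k : ℕ => ‖∑ j : Fin r,
        c j * Complex.exp (2 * Real.pi * Complex.I * k / N) ^ (j : ℕ)‖)
      (Finset.mem_range.mpr hk)
    rw [hnodes k] at h
    exact h
  have hM0 : 0 ≤ M := le_trans (norm_nonneg _) (hMle 0 hNpos)
  -- Claim A : reproduction formula
  have hinner : ∀ mi : Fin r,
      ∑ j ∈ Finset.range N, (Complex.exp (2*Real.pi*Complex.I/N) ^ j) ^ (mi:ℕ) * pdbT N z a n j
        = ((n : ℂ) * N) * z ^ (mi:ℕ) := by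
    intro mi
    have hm : (mi:ℕ) < r := mi.2
    have hTj : ∀ j ∈ Finset.range N,
        (Complex.exp (2*Real.pi*Complex.I/N) ^ j) ^ (mi:ℕ) * pdbT N z a n j
        = (∑ k ∈ Finset.range n, ∑ l ∈ Finset.range n,
            (Complex.exp (2*Real.pi*Complex.I/N) ^ j) ^ (mi:ℕ) * pdbW N z j ^ ((a:ℤ) + ((k:ℤ) - l)))
          + ((∑ k ∈ Finset.range a, ∑ l ∈ Finset.range a,
            (Complex.exp (2*Real.pi*Complex.I/N) ^ j) ^ (mi:ℕ) * pdbW N z j ^ (((2*a:ℕ):ℤ) + ((k:ℤ) - l)))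
            + (∑ k ∈ Finset.range a, ∑ l ∈ Finset.range a,
            (Complex.exp (2*Real.pi*Complex.I/N) ^ j) ^ (mi:ℕ) * pdbW N z j ^ ((0:ℤ) + ((k:ℤ) - l)))) := by
      intro j _
      rw [pdb_T_expand N z hz a n j, mul_add, mul_add]
      congr 1
      · rw [Finset.mul_sum]
        refine Finset.sum_congr rfl (fun k _ => ?_)
        rw [Finset.mul_sum]
      congr 1
      · rw [Finset.mul_sum]
        refine Finset.sum_congr rfl (fun k _ => ?_)
        rw [Finset.mul_sum]
      · rw [Finset.mul_sum]
        refine Finset.sum_congr rfl (fun k _ => ?_)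
        rw [Finset.mul_sum]
    rw [Finset.sum_congr rfl hTj, Finset.sum_add_distrib, Finset.sum_add_distrib]
    rw [pdb_piece N hNpos z (mi:ℕ) n (a:ℤ) (by intro k l hk hl; omega),
      pdb_piece N hNpos z (mi:ℕ) a (((2*a:ℕ):ℤ)) (by intro k l hk hl; omega),
      pdb_piece N hNpos z (mi:ℕ) a (0:ℤ) (by intro k l hk hl; omega)]
    have hc : ((n - (((mi:ℕ):ℤ) - (a:ℤ)).natAbs : ℕ):ℂ)
        + (((a - (((mi:ℕ):ℤ) - ((2*a:ℕ):ℤ)).natAbs : ℕ):ℂ)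
          + ((a - (((mi:ℕ):ℤ) - (0:ℤ)).natAbs : ℕ):ℂ)) = (n:ℂ) := by
      have hcn : (n - (((mi:ℕ):ℤ) - (a:ℤ)).natAbs)
          + ((a - (((mi:ℕ):ℤ) - ((2*a:ℕ):ℤ)).natAbs)
            + (a - (((mi:ℕ):ℤ) - (0:ℤ)).natAbs)) = n := by
        omega
      exact_mod_cast hcn
    linear_combination ((N:ℂ) * z^(mi:ℕ)) * hc
  have claimA : ∑ j ∈ Finset.range N,
      (∑ mi : Fin r, c mi * (Complex.exp (2*Real.pi*Complex.I/N) ^ j) ^ (mi : ℕ)) * pdbT N z a n j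
      = ((n : ℂ) * N) * ∑ k : Fin r, c k * z ^ (k : ℕ) := by
    calc ∑ j ∈ Finset.range N,
        (∑ mi : Fin r, c mi * (Complex.exp (2*Real.pi*Complex.I/N) ^ j) ^ (mi : ℕ)) * pdbT N z a n j
        = ∑ j ∈ Finset.range N, ∑ mi : Fin r,
            c mi * ((Complex.exp (2*Real.pi*Complex.I/N) ^ j) ^ (mi : ℕ) * pdbT N z a n j) := by
          refine Finset.sum_congr rfl (fun j _ => ?_)
          rw [Finset.sum_mul]
          exact Finset.sum_congr rfl (fun mi _ => by ring)
      _ = ∑ mi : Fin r, ∑ j ∈ Finset.range N,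
            c mi * ((Complex.exp (2*Real.pi*Complex.I/N) ^ j) ^ (mi : ℕ) * pdbT N z a n j) :=
          Finset.sum_comm
      _ = ∑ mi : Fin r, c mi * (((n : ℂ) * N) * z ^ (mi:ℕ)) := by
          refine Finset.sum_congr rfl (fun mi _ => ?_)
          rw [← Finset.mul_sum, hinner mi]
      _ = ((n : ℂ) * N) * ∑ k : Fin r, c k * z ^ (k : ℕ) := by
          rw [Finset.mul_sum]
          exact Finset.sum_congr rfl (fun mi _ => by ring)
  -- Claim B : bound on the kernel mass
  have habsT : ∀ j : ℕ, ‖pdbT N z a n j‖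
      ≤ Complex.normSq (pdbP N z n j) + 2 * Complex.normSq (pdbP N z a j) := by
    intro j
    have habsWz : ∀ d : ℤ, ‖pdbW N z j ^ d‖ = 1 := by
      intro d
      rw [norm_zpow, pdb_absW N z hz j, one_zpow]
    rw [pdbT, Complex.mul_conj, Complex.mul_conj]
    calc ‖pdbW N z j ^ (a:ℤ) * (Complex.normSq (pdbP N z n j) : ℂ)
          + (pdbW N z j ^ ((2*a : ℕ):ℤ) + 1) * (Complex.normSq (pdbP N z a j) : ℂ)‖
        ≤ ‖pdbW N z j ^ (a:ℤ) * (Complex.normSq (pdbP N z n j) : ℂ)‖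
          + ‖(pdbW N z j ^ ((2*a : ℕ):ℤ) + 1) * (Complex.normSq (pdbP N z a j) : ℂ)‖ :=
          norm_add_le _ _
      _ ≤ Complex.normSq (pdbP N z n j) + 2 * Complex.normSq (pdbP N z a j) := by
          rw [norm_mul, norm_mul, habsWz, one_mul, Complex.norm_real, Complex.norm_real, Real.norm_eq_abs, Real.norm_eq_abs,
            _root_.abs_of_nonneg (Complex.normSq_nonneg _), _root_.abs_of_nonneg (Complex.normSq_nonneg _)]
          have h2 : ‖pdbW N z j ^ ((2*a : ℕ):ℤ) + 1‖ ≤ 2 := by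
            calc ‖pdbW N z j ^ ((2*a : ℕ):ℤ) + 1‖
                ≤ ‖pdbW N z j ^ ((2*a : ℕ):ℤ)‖ + ‖(1:ℂ)‖ := norm_add_le _ _
              _ = 2 := by rw [habsWz, norm_one]; norm_num
          nlinarith [Complex.normSq_nonneg (pdbP N z a j)]
  have hsumP : ∀ b : ℕ, b ≤ N →
      ∑ j ∈ Finset.range N, Complex.normSq (pdbP N z b j) = (N:ℝ) * b := by
    intro b hb
    have hC : ∑ j ∈ Finset.range N, (Complex.normSq (pdbP N z b j) : ℂ) = (N:ℂ) * b := by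
      have hPP : ∀ j ∈ Finset.range N, (Complex.normSq (pdbP N z b j) : ℂ)
          = ∑ k ∈ Finset.range b, ∑ l ∈ Finset.range b,
              (Complex.exp (2*Real.pi*Complex.I/N) ^ j) ^ (0:ℕ) * pdbW N z j ^ ((0:ℤ) + ((k:ℤ) - l)) := by
        intro j _
        rw [← Complex.mul_conj, pdb_PP N z hz b j]
        refine Finset.sum_congr rfl (fun k _ => ?_)
        refine Finset.sum_congr rfl (fun l _ => ?_)
        rw [pow_zero, one_mul, zero_add]
      rw [Finset.sum_congr rfl hPP,
        pdb_piece N hNpos z 0 b (0:ℤ) (by intro k l hk hl; omega)]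
      simp
    have hR : ((∑ j ∈ Finset.range N, Complex.normSq (pdbP N z b j) : ℝ) : ℂ) = (((N:ℝ) * b : ℝ) : ℂ) := by
      push_cast
      push_cast at hC
      exact hC
    exact_mod_cast hR
  have claimB : ∑ j ∈ Finset.range N, ‖pdbT N z a n j‖
      ≤ (N:ℝ) * n + 2 * ((N:ℝ) * a) := by
    calc ∑ j ∈ Finset.range N, ‖pdbT N z a n j‖
        ≤ ∑ j ∈ Finset.range N,
            (Complex.normSq (pdbP N z n j) + 2 * Complex.normSq (pdbP N z a j)) :=
          Finset.sum_le_sum (fun j _ => habsT j)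
      _ = (N:ℝ) * n + 2 * ((N:ℝ) * a) := by
          rw [Finset.sum_add_distrib, ← Finset.mul_sum, hsumP n (by omega), hsumP a (by omega)]
  -- assemble
  have hmain : (n:ℝ) * N * ‖∑ k : Fin r, c k * z ^ (k : ℕ)‖
      ≤ M * ((N:ℝ) * n + 2 * ((N:ℝ) * a)) := by
    have h1 : (n:ℝ) * N * ‖∑ k : Fin r, c k * z ^ (k : ℕ)‖
        = ‖∑ j ∈ Finset.range N,
            (∑ mi : Fin r, c mi * (Complex.exp (2*Real.pi*Complex.I/N) ^ j) ^ (mi : ℕ)) * pdbT N z a n j‖ := by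
      rw [claimA, norm_mul, norm_mul, Complex.norm_natCast, Complex.norm_natCast]
    rw [h1]
    calc ‖∑ j ∈ Finset.range N,
            (∑ mi : Fin r, c mi * (Complex.exp (2*Real.pi*Complex.I/N) ^ j) ^ (mi : ℕ)) * pdbT N z a n j‖
        ≤ ∑ j ∈ Finset.range N, ‖(∑ mi : Fin r, c mi * (Complex.exp (2*Real.pi*Complex.I/N) ^ j) ^ (mi : ℕ)) * pdbT N z a n j‖ :=
          norm_sum_le _ _
      _ ≤ ∑ j ∈ Finset.range N, M * ‖pdbT N z a n j‖ := by
          refine Finset.sum_le_sum (fun j hj => ?_)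
          rw [norm_mul]
          exact mul_le_mul_of_nonneg_right (hMle j (Finset.mem_range.mp hj)) (norm_nonneg _)
      _ = M * ∑ j ∈ Finset.range N, ‖pdbT N z a n j‖ := by rw [Finset.mul_sum]
      _ ≤ M * ((N:ℝ) * n + 2 * ((N:ℝ) * a)) := mul_le_mul_of_nonneg_left claimB hM0
  -- final arithmetic
  have hNR : (0:ℝ) < N := by exact_mod_cast hNpos
  have hnR : (0:ℝ) < n := by exact_mod_cast hnpos
  have hnNr : (n:ℝ) = (N:ℝ) - r := by
    rw [hndef]
    push_cast [Nat.cast_sub (by omega : r ≤ N)]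
    ring
  have haR : 2*(a:ℝ) ≤ r := by exact_mod_cast ha1
  have hkey2 : 2 * ((N:ℝ) * a) ≤ 4 * Real.pi * r * n := by
    have hstep1 : 2 * ((N:ℝ) * a) ≤ (N:ℝ) * r := by nlinarith
    have hstep2 : (N:ℝ) ≤ 4 * Real.pi * ((N:ℝ) - r) := by nlinarith
    have hstep3 : (N:ℝ) * r ≤ 4 * Real.pi * ((N:ℝ) - r) * r := by nlinarith
    rw [hnNr]
    nlinarith
  have hfin : (n:ℝ) * N * ‖∑ k : Fin r, c k * z ^ (k : ℕ)‖
      ≤ (n:ℝ) * N * ((1 + 4 * Real.pi * r / N) * M) := by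
    have hexp : (n:ℝ) * N * ((1 + 4 * Real.pi * r / N) * M)
        = M * ((N:ℝ) * n) + M * (4 * Real.pi * r * n) := by
      field_simp
    have h3 : M * (2 * ((N:ℝ) * a)) ≤ M * (4 * Real.pi * r * n) :=
      mul_le_mul_of_nonneg_left hkey2 hM0
    have e1 : M * ((N:ℝ) * n + 2 * ((N:ℝ) * a)) = M * ((N:ℝ) * n) + M * (2 * ((N:ℝ) * a)) := by ring
    rw [hexp]
    rw [e1] at hmain
    linarith
  have hpos : (0:ℝ) < (n:ℝ) * N := by positivity
  calc ‖∑ k : Fin r, c k * z ^ (k : ℕ)‖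
      ≤ (1 + 4 * Real.pi * r / N) * M :=
        le_of_mul_le_mul_left (by linarith [hfin]) hpos
    _ = (1 + 4 * Real.pi * r / N) * M := rfl
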